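/- For every integer s ≥ 1, ∫_{√s−2}^{√s+2} √(4−(x−√s)²)/(2π(x√s+1)) dx = 1/s; consequently the measure ν_s = (√(4−(x−√s)²)/(2π(x√s+1)))·1_{|x−√s|≤2} dx + (1−1/s)·δ_{−1/√s} is a Borel probability measure on ℝ. -/

import Mathlib

open MeasureTheory Polynomial Filter

/-- The orthogonal polynomials `Q_n^s`: `Q_0 = 1`, `Q_1 = X`,
`X * Q_n = Q_{n+1} + √s * Q_n + Q_{n-1}`. -/
noncomputable def Qpoly (s : ℕ) : ℕ → Polynomial ℝ
  | 0 => 1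
  | 1 => Polynomial.X
  | (n + 2) => Polynomial.X * Qpoly s (n + 1)
      - Polynomial.C (Real.sqrt s) * Qpoly s (n + 1) - Qpoly s n

/-- Chebyshev polynomials of the second kind: `P_0 = 1`, `P_1 = X`,
`X * P_n = P_{n+1} + P_{n-1}`. -/
noncomputable def Ppoly : ℕ → Polynomial ℝ
  | 0 => 1
  | 1 => Polynomial.X
  | (n + 2) => Polynomial.X * Ppoly (n + 1) - Ppoly n

/-- The density of the absolutely continuous part of `ν_s`. -/
noncomputable def nuDensity (s : ℕ) (x : ℝ) : ℝ :=
  Real.sqrt (4 - (x - Real.sqrt s) ^ 2) / (2 * Real.pi * (x * Real.sqrt s + 1))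

/-- The free Meixner measure `ν_s`. -/
noncomputable def nuMeas (s : ℕ) : Measure ℝ :=
  volume.withDensity (fun x => ENNReal.ofReal
      (if |x - Real.sqrt s| ≤ 2 then nuDensity s x else 0))
    + ENNReal.ofReal (1 - 1 / (s : ℝ)) • Measure.dirac (-1 / Real.sqrt s)

/-- The density `f_c`. -/
noncomputable def fc (s : ℕ) (c x : ℝ) : ℝ :=
  (Real.exp c + Real.sqrt s) / (Real.exp c + Real.exp (-c) + Real.sqrt s - x)

/-- The measure `η_c^s = f_c · ν_s + 1_{c<0} ((e^{-c}-e^c)/(e^{-c}+√s)) δ_{e^c+√s+e^{-c}}`. -/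
noncomputable def etaMeas (s : ℕ) (c : ℝ) : Measure ℝ :=
  (nuMeas s).withDensity (fun x => ENNReal.ofReal (fc s c x))
    + (if c < 0 then
        ENNReal.ofReal ((Real.exp (-c) - Real.exp c) / (Real.exp (-c) + Real.sqrt s))
      else 0) • Measure.dirac (Real.exp c + Real.sqrt s + Real.exp (-c))

/-- Total variation distance between two Borel measures on `ℝ`. -/
noncomputable def dTV (μ ν : Measure ℝ) : ℝ :=
  ⨆ A : {A : Set ℝ // MeasurableSet A}, |(μ A.1).toReal - (ν A.1).toReal|

section Aux
open intervalIntegral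

lemma sqrt4 : Real.sqrt 4 = 2 := by
  rw [show (4:ℝ) = 2^2 by norm_num, Real.sqrt_sq (by norm_num)]

lemma intInt (t : ℝ) (ht : 2 ≤ t) :
    IntervalIntegrable (fun u => Real.sqrt (4 - u^2) / (u + t)) volume (-2) 2 := by
  rcases eq_or_lt_of_le ht with h2 | h2
  · subst h2
    have hg : IntervalIntegrable (fun u : ℝ => 2 * ((u + 2) ^ (-(1/2) : ℝ))) volume (-2) 2 := by
      have := (intervalIntegrable_rpow' (a := 0) (b := 4) (r := -(1/2)) (by norm_num)).comp_sub_right (-2)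
      have h2 := this.const_mul 2
      norm_num at h2 ⊢
      exact h2
    apply hg.mono_fun
    · exact ((Real.continuous_sqrt.comp (by continuity)).measurable.div
        (by fun_prop)).aestronglyMeasurable
    · rw [Set.uIoc_of_le (by norm_num : (-2:ℝ) ≤ 2)]
      filter_upwards [ae_restrict_mem measurableSet_Ioc] with u hu
      have h1 : (0:ℝ) < u + 2 := by linarith [hu.1]
      have h2u : (0:ℝ) ≤ 2 - u := by linarith [hu.2]
      have key : Real.sqrt (4 - u^2) / (u + 2) = Real.sqrt (2 - u) / Real.sqrt (u + 2) := by
        have h4 : 4 - u^2 = (2 - u) * (u + 2) := by ring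
        rw [h4, Real.sqrt_mul h2u, mul_div_assoc, Real.sqrt_div_self']
        field_simp
      have hrp : (u + 2) ^ (-(1/2) : ℝ) = (Real.sqrt (u + 2))⁻¹ := by
        rw [Real.rpow_neg h1.le, ← Real.sqrt_eq_rpow]
      have hb : Real.sqrt (4 - u^2) / (u + 2) ≤ 2 * ((u + 2) ^ (-(1/2) : ℝ)) := by
        rw [key, hrp, div_eq_mul_inv]
        apply mul_le_mul_of_nonneg_right _ (inv_nonneg.2 (Real.sqrt_nonneg _))
        calc Real.sqrt (2 - u) ≤ Real.sqrt 4 := Real.sqrt_le_sqrt (by linarith)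
        _ = 2 := sqrt4
      have hnn : 0 ≤ Real.sqrt (4 - u^2) / (u + 2) :=
        div_nonneg (Real.sqrt_nonneg _) h1.le
      rw [Real.norm_eq_abs, Real.norm_eq_abs, abs_of_nonneg hnn,
        abs_of_nonneg (by positivity)]
      exact hb
  · apply ContinuousOn.intervalIntegrable
    apply ContinuousOn.div
    · exact (Real.continuous_sqrt.comp (by continuity)).continuousOn
    · fun_prop
    · intro u hu
      rw [Set.uIcc_of_le (by norm_num : (-2:ℝ) ≤ 2)] at hu
      intro h; nlinarith [hu.1]


lemma int_two : ∫ u in (-2:ℝ)..2, Real.sqrt (4 - u^2) / (u + 2) = 2 * Real.pi := by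
  have hF : ∀ u ∈ Set.Ioo (-2:ℝ) 2, HasDerivAt
      (fun u : ℝ => 2 * Real.arcsin (u/2) + Real.sqrt (4 - u^2))
      (Real.sqrt (4 - u^2) / (u + 2)) u := by
    intro u hu
    obtain ⟨hl, hr⟩ := hu
    have hvpos : 0 < 4 - u^2 := by nlinarith
    have hv : (0:ℝ) < Real.sqrt (4 - u^2) := Real.sqrt_pos.2 hvpos
    have hv2 : Real.sqrt (4 - u^2) ^ 2 = 4 - u^2 := Real.sq_sqrt hvpos.le
    have harc : HasDerivAt (fun x : ℝ => Real.arcsin (x/2))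
        (1 / Real.sqrt (1 - (u/2)^2) * (1/2)) u := by
      exact (Real.hasDerivAt_arcsin (by intro h; rw [div_eq_iff (by norm_num : (2:ℝ) ≠ 0)] at h; linarith)
        (by intro h; rw [div_eq_iff (by norm_num : (2:ℝ) ≠ 0)] at h; linarith)).comp u
        ((hasDerivAt_id u).div_const 2)
    have hpow : HasDerivAt (fun x : ℝ => 4 - x^2) (-(2*u)) u := by
      simpa using (hasDerivAt_pow 2 u).const_sub 4
    have hsq : HasDerivAt (fun x : ℝ => Real.sqrt (4 - x^2))
        (1 / (2 * Real.sqrt (4 - u^2)) * -(2*u)) u :=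
      (Real.hasDerivAt_sqrt hvpos.ne').comp u hpow
    have := (harc.const_mul 2).add hsq
    convert this using 1
    · rfl
    · rfl
    · rfl
    have hsq14 : Real.sqrt (1 - (u/2)^2) = Real.sqrt (4 - u^2) / 2 := by
      rw [show (1 - (u/2)^2) = (4 - u^2)/4 by ring, Real.sqrt_div hvpos.le, sqrt4]
    rw [hsq14]
    have h2 : u + 2 ≠ 0 := by linarith
    field_simp
    nlinarith [hv2]
  have hcont : ContinuousOn
      (fun u : ℝ => 2 * Real.arcsin (u/2) + Real.sqrt (4 - u^2)) (Set.Icc (-2) 2) :=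
    ((continuous_const.mul (Real.continuous_arcsin.comp (continuous_id.div_const 2))).add
      (Real.continuous_sqrt.comp (by continuity))).continuousOn
  have key := intervalIntegral.integral_eq_sub_of_hasDerivAt_of_le (by norm_num : (-2:ℝ) ≤ 2)
    hcont hF (intInt 2 le_rfl)
  rw [key]
  norm_num [Real.arcsin_one, Real.arcsin_neg, sqrt4]
  ring


lemma int_gt (t : ℝ) (ht : 2 < t) :
    ∫ u in (-2:ℝ)..2, Real.sqrt (4 - u^2) / (u + t)
      = Real.pi * (t - Real.sqrt (t^2 - 4)) := by
  set k := Real.sqrt (t^2 - 4) with hk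
  have hk2pos : 0 < t^2 - 4 := by nlinarith
  have hkpos : 0 < k := Real.sqrt_pos.2 hk2pos
  have hksq : k^2 = t^2 - 4 := Real.sq_sqrt hk2pos.le
  set F : ℝ → ℝ := fun u => t * Real.arcsin (u/2) + Real.sqrt (4 - u^2)
      - k * Real.arcsin ((4 + t*u)/(2*(u+t))) with hFdef
  have hden : ∀ u : ℝ, u ∈ Set.Icc (-2:ℝ) 2 → 0 < u + t := fun u hu => by
    have := hu.1; linarith
  have hF : ∀ u ∈ Set.Ioo (-2:ℝ) 2, HasDerivAt F (Real.sqrt (4 - u^2) / (u + t)) u := by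
    intro u hu
    obtain ⟨hl, hr⟩ := hu
    have hut : 0 < u + t := by linarith
    have hvpos : 0 < 4 - u^2 := by nlinarith
    have hv : (0:ℝ) < Real.sqrt (4 - u^2) := Real.sqrt_pos.2 hvpos
    have hv2 : Real.sqrt (4 - u^2) ^ 2 = 4 - u^2 := Real.sq_sqrt hvpos.le
    have harc : HasDerivAt (fun x : ℝ => Real.arcsin (x/2))
        (1 / Real.sqrt (1 - (u/2)^2) * (1/2)) u :=
      (Real.hasDerivAt_arcsin (by intro h; rw [div_eq_iff (by norm_num : (2:ℝ) ≠ 0)] at h; linarith)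
        (by intro h; rw [div_eq_iff (by norm_num : (2:ℝ) ≠ 0)] at h; linarith)).comp u
        ((hasDerivAt_id u).div_const 2)
    have hpow : HasDerivAt (fun x : ℝ => 4 - x^2) (-(2*u)) u := by
      simpa using (hasDerivAt_pow 2 u).const_sub 4
    have hsq : HasDerivAt (fun x : ℝ => Real.sqrt (4 - x^2))
        (1 / (2 * Real.sqrt (4 - u^2)) * -(2*u)) u :=
      (Real.hasDerivAt_sqrt hvpos.ne').comp u hpow
    -- derivative of g
    have hgnum : HasDerivAt (fun x : ℝ => 4 + t*x) t u := by
      simpa using ((hasDerivAt_id u).const_mul t).const_add 4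
    have hgden : HasDerivAt (fun x : ℝ => 2*(x+t)) 2 u := by
      simpa using (((hasDerivAt_id u).add_const t).const_mul 2)
    have hg : HasDerivAt (fun x : ℝ => (4 + t*x)/(2*(x+t)))
        ((t * (2*(u+t)) - (4 + t*u) * 2) / (2*(u+t))^2) u :=
      hgnum.div hgden (by positivity)
    -- g is in (-1, 1)
    have hgsq : 1 - ((4 + t*u)/(2*(u+t)))^2 = (t^2-4)*(4-u^2) / (2*(u+t))^2 := by
      field_simp
      ring
    have hgsqpos : 0 < 1 - ((4 + t*u)/(2*(u+t)))^2 := by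
      rw [hgsq]; positivity
    have hg1 : (4 + t*u)/(2*(u+t)) ≠ -1 := by
      intro h; rw [h] at hgsqpos; norm_num at hgsqpos
    have hg2 : (4 + t*u)/(2*(u+t)) ≠ 1 := by
      intro h; rw [h] at hgsqpos; norm_num at hgsqpos
    have harcg : HasDerivAt (fun x : ℝ => Real.arcsin ((4 + t*x)/(2*(x+t))))
        (1 / Real.sqrt (1 - ((4 + t*u)/(2*(u+t)))^2)
          * ((t * (2*(u+t)) - (4 + t*u) * 2) / (2*(u+t))^2)) u :=
      by have := (Real.hasDerivAt_arcsin hg1 hg2).comp u hg; exact this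
    have hD := ((harc.const_mul t).add hsq).sub (harcg.const_mul k)
    convert hD using 1
    · rfl
    · rfl
    · rfl
    have hsq14 : Real.sqrt (1 - (u/2)^2) = Real.sqrt (4 - u^2) / 2 := by
      rw [show (1 - (u/2)^2) = (4 - u^2)/4 by ring, Real.sqrt_div hvpos.le, sqrt4]
    have hsqg : Real.sqrt (1 - ((4 + t*u)/(2*(u+t)))^2)
        = k * Real.sqrt (4 - u^2) / (2*(u+t)) := by
      rw [hgsq, show ((t^2-4)*(4-u^2) / (2*(u+t))^2) = (t^2-4)*(4-u^2) / (2*(u+t))^2 from rfl,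
        Real.sqrt_div (by positivity), Real.sqrt_mul hk2pos.le,
        Real.sqrt_sq (by positivity)]
    rw [hsq14, hsqg]
    have h2 : (2:ℝ)*(u+t) ≠ 0 := by positivity
    field_simp
    linear_combination hv2
  have hcont : ContinuousOn F (Set.Icc (-2) 2) := by
    apply ContinuousOn.sub
    · exact ((continuous_const.mul (Real.continuous_arcsin.comp (continuous_id.div_const 2))).add
        (Real.continuous_sqrt.comp (by continuity))).continuousOn
    · apply ContinuousOn.mul continuousOn_const
      apply Real.continuous_arcsin.comp_continuousOn
      apply ContinuousOn.div (by fun_prop) (by fun_prop)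
      intro u hu
      have := hden u hu
      positivity
  have key := intervalIntegral.integral_eq_sub_of_hasDerivAt_of_le (by norm_num : (-2:ℝ) ≤ 2)
    hcont hF (intInt t ht.le)
  rw [key, hFdef]
  have e1 : (4 + t*2)/(2*((2:ℝ)+t)) = 1 := by
    rw [div_eq_one_iff_eq (by positivity)]; ring
  have e2 : (4 + t*(-2))/(2*((-2:ℝ)+t)) = -1 := by
    rw [div_eq_iff (by intro h; nlinarith [ht] : 2*((-2:ℝ)+t) ≠ 0)]; ring
  simp only [e1, e2, Real.arcsin_one, Real.arcsin_neg_one]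
  norm_num [Real.arcsin_one, Real.arcsin_neg, sqrt4]
  ring


lemma int_ge (t : ℝ) (ht : 2 ≤ t) :
    ∫ u in (-2:ℝ)..2, Real.sqrt (4 - u^2) / (u + t)
      = Real.pi * (t - Real.sqrt (t^2 - 4)) := by
  rcases eq_or_lt_of_le ht with h | h
  · subst h; rw [int_two]; norm_num; ring
  · exact int_gt t h

end Aux

/-- The absolutely continuous part of `ν_s` has total mass `1/s`, and `ν_s` is a
probability measure. -/
theorem stmt5 (s : ℕ) (hs : 1 ≤ s) :
    (∫ x in Set.Icc (Real.sqrt s - 2) (Real.sqrt s + 2), nuDensity s x) = 1 / s ∧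
    IsProbabilityMeasure (nuMeas s) := by
  have hs1 : (1:ℝ) ≤ (s:ℝ) := by exact_mod_cast hs
  set a : ℝ := Real.sqrt s with ha
  have ha2 : a ^ 2 = s := Real.sq_sqrt (Nat.cast_nonneg s)
  have hapos : 0 < a := Real.sqrt_pos.2 (by linarith)
  have ha1 : 1 ≤ a := by nlinarith
  set t : ℝ := ((s:ℝ) + 1) / a with htdef
  have hat : a * t = (s:ℝ) + 1 := by rw [htdef]; field_simp
  have ht : 2 ≤ t := by
    rw [htdef, le_div_iff₀ hapos]; nlinarith
  -- pointwise identity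
  have hpt : ∀ x : ℝ, nuDensity s x
      = (1 / (2 * Real.pi * a)) * (Real.sqrt (4 - (x - a)^2) / ((x - a) + t)) := by
    intro x
    have hden : 2 * Real.pi * (x * a + 1) = (2 * Real.pi * a) * ((x - a) + t) := by
      linear_combination (-2*Real.pi)*hat + 2*Real.pi*ha2
    rw [nuDensity, hden, div_mul_div_comm, one_mul]
  -- interval integrability of nuDensity on [a-2, a+2]
  have hII : IntervalIntegrable (nuDensity s) volume (a - 2) (a + 2) := by
    have h1 := ((intInt t ht).comp_sub_right a).const_mul (1 / (2 * Real.pi * a))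
    have h2 : (-2 : ℝ) + a = a - 2 := by ring
    have h3 : (2 : ℝ) + a = a + 2 := by ring
    rw [h2, h3] at h1
    have hfe : nuDensity s = fun x => (1 / (2 * Real.pi * a)) *
        (Real.sqrt (4 - (x - a)^2) / ((x - a) + t)) := funext hpt
    rw [hfe]
    exact h1
  -- value of the interval integral
  have hval : ∫ x in (a-2)..(a+2), nuDensity s x = 1 / s := by
    have hcongr : ∫ x in (a-2)..(a+2), nuDensity s x
        = ∫ x in (a-2)..(a+2), (1 / (2 * Real.pi * a)) *
            (Real.sqrt (4 - (x - a)^2) / ((x - a) + t)) := by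
      apply intervalIntegral.integral_congr
      intro x _; exact hpt x
    rw [hcongr, intervalIntegral.integral_const_mul]
    have hcomp : ∫ x in (a-2)..(a+2), Real.sqrt (4 - (x - a)^2) / ((x - a) + t)
        = ∫ u in (-2:ℝ)..2, Real.sqrt (4 - u^2) / (u + t) := by
      have := intervalIntegral.integral_comp_sub_right
        (a := a - 2) (b := a + 2) (fun u => Real.sqrt (4 - u^2) / (u + t)) a
      rw [this]; norm_num
    rw [hcomp, int_ge t ht]
    have hsqt : Real.sqrt (t^2 - 4) = ((s:ℝ) - 1) / a := by
      have h4 : t^2 - 4 = (((s:ℝ) - 1) / a)^2 := by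
        rw [htdef]; field_simp; nlinarith [ha2]
      rw [h4, Real.sqrt_sq (div_nonneg (by linarith) hapos.le)]
    rw [hsqt, htdef]
    have hpi := Real.pi_ne_zero
    field_simp
    nlinarith [ha2, Real.pi_pos]
  constructor
  · rw [MeasureTheory.integral_Icc_eq_integral_Ioc,
      ← intervalIntegral.integral_of_le (by linarith : a - 2 ≤ a + 2)]
    exact hval
  · constructor
    have hIcc : ∀ x : ℝ, (|x - a| ≤ 2) ↔ x ∈ Set.Icc (a-2) (a+2) := by
      intro x; rw [abs_sub_le_iff, Set.mem_Icc]; constructor <;> (intro h; constructor <;> linarith [h.1, h.2])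
    have hnn : ∀ x ∈ Set.Icc (a-2) (a+2), 0 ≤ nuDensity s x := by
      intro x hx
      have : 0 ≤ x * a + 1 := by nlinarith [hx.1, ha2]
      exact div_nonneg (Real.sqrt_nonneg _) (by positivity)
    have hInt : IntegrableOn (nuDensity s) (Set.Icc (a-2) (a+2)) volume := by
      exact (integrableOn_Icc_iff_integrableOn_Ioc (by simp)).2 hII.1
    have hlint : ∫⁻ x, ENNReal.ofReal (if |x - a| ≤ 2 then nuDensity s x else 0)
        = ENNReal.ofReal (1 / s) := by
      have heq : (fun x => ENNReal.ofReal (if |x - a| ≤ 2 then nuDensity s x else 0))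
          = Set.indicator (Set.Icc (a-2) (a+2)) (fun x => ENNReal.ofReal (nuDensity s x)) := by
        ext x
        by_cases h : |x - a| ≤ 2
        · rw [if_pos h, Set.indicator_of_mem ((hIcc x).1 h)]
        · rw [if_neg h, Set.indicator_of_notMem (fun hm => h ((hIcc x).2 hm))]
          simp
      rw [heq, lintegral_indicator measurableSet_Icc _,
        ← MeasureTheory.ofReal_integral_eq_lintegral_ofReal hInt
          ((ae_restrict_iff' measurableSet_Icc).2 (Filter.Eventually.of_forall hnn))]
      rw [MeasureTheory.integral_Icc_eq_integral_Ioc,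
        ← intervalIntegral.integral_of_le (by linarith : a - 2 ≤ a + 2), hval]
    rw [nuMeas]
    rw [Measure.add_apply, Measure.smul_apply, smul_eq_mul,
      Measure.dirac_apply_of_mem (Set.mem_univ _), mul_one,
      MeasureTheory.withDensity_apply _ MeasurableSet.univ, Measure.restrict_univ]
    rw [← ha, hlint, ← ENNReal.ofReal_add (by positivity) (by
      have : 1 / (s:ℝ) ≤ 1 := by
        rw [div_le_one (by linarith)]; linarith
      linarith)]
    norm_num
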